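/- Let R be a ring, n ≥ 1, and suppose R is n-skew-Armendariz. Then every idempotent of A_n is a constant polynomial: if e ∈ A_n satisfies e * e = e, then e m = 0 for every nonzero exponent vector m : Fin n →₀ ℕ. -/

import Mathlib

/-- If `R` is `n`-skew-Armendariz (`n ≥ 1`), then every idempotent of
`A_n = AddMonoidAlgebra R (Fin n →₀ ℕ)` is a constant polynomial: its coefficient at
every nonzero exponent vector vanishes. -/
theorem idempotent_of_nSkewArmendariz_is_constant (R : Type*) [Ring R] (n : ℕ)
    (hn : 1 ≤ n)
    (hSA : ∀ f g : AddMonoidAlgebra R (Fin n →₀ ℕ), f * g = 0 →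
      ∀ m : Fin n →₀ ℕ, f.coeff 0 * g.coeff m = 0)
    (e : AddMonoidAlgebra R (Fin n →₀ ℕ)) (he : e * e = e) :
    ∀ m : Fin n →₀ ℕ, m ≠ 0 → e.coeff m = 0 := by
  intro m hm
  have h1 : e * (1 - e) = 0 := by rw [mul_sub, mul_one, he, sub_self]
  have h2 : (1 - e) * e = 0 := by rw [sub_mul, one_mul, he, sub_self]
  have hone : (1 : AddMonoidAlgebra R (Fin n →₀ ℕ)).coeff m = 0 := by
    rw [AddMonoidAlgebra.one_def, AddMonoidAlgebra.coeff_single]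
    exact Finsupp.single_eq_of_ne' (Ne.symm hm)
  have honez : (1 : AddMonoidAlgebra R (Fin n →₀ ℕ)).coeff 0 = 1 := by
    rw [AddMonoidAlgebra.one_def, AddMonoidAlgebra.coeff_single]
    exact Finsupp.single_eq_same
  have hA := hSA e (1 - e) h1 m
  have hB := hSA (1 - e) e h2 m
  rw [AddMonoidAlgebra.coeff_sub, Finsupp.sub_apply, hone, zero_sub, mul_neg, neg_eq_zero] at hA
  rw [AddMonoidAlgebra.coeff_sub, Finsupp.sub_apply, honez, sub_mul, one_mul, hA, sub_zero] at hB
  exact hB
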